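/- Let c₁, c₂, c₃ > 0 and F > 0 be real numbers such that ϱ = c₁/(2√(c₂c₃)·F) > 1. Then there exists a time t_ϱ > 0, depending only on ϱ, with the following property: for every α > 0 and every continuously differentiable L : [0,∞) → ℝ with L′(t) + α·c₁·L(t) ≤ c₂·F² + c₃·α²·L(t)² for every t ≥ 0 and L(0) ≤ √(c₂/c₃)·(F/α)·(2ϱ−1), one has L(t) ≤ √(c₂/c₃)·(F/α)·(1/(2ϱ−1)) for every t ≥ t_ϱ/(α·√(c₂c₃)·F). -/

import Mathlib

/-- Barrier lemma: if the derivative is strictly negative whenever `L` touches the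
level `C` (for times `≥ t₀`), and `L t₀ ≤ C`, then `L t ≤ C` for all `t ≥ t₀`. -/
lemma barrier_aux (L L' : ℝ → ℝ) (C t₀ : ℝ) (ht₀ : 0 ≤ t₀)
    (hL : ∀ t ∈ Set.Ici (0:ℝ), HasDerivAt L (L' t) t)
    (hC : ∀ t, t₀ ≤ t → L t = C → L' t < 0)
    (h0 : L t₀ ≤ C) : ∀ t, t₀ ≤ t → L t ≤ C := by
  intro t₁ ht₁
  by_contra hcon
  push_neg at hcon
  set K : Set ℝ := {t | t ∈ Set.Icc t₀ t₁ ∧ L t ≤ C} with hK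
  have hKne : K.Nonempty := ⟨t₀, ⟨le_refl _, ht₁⟩, h0⟩
  have hKbdd : BddAbove K := ⟨t₁, fun x hx => hx.1.2⟩
  set σ := sSup K with hσ
  have hσ_ge : t₀ ≤ σ := le_csSup hKbdd ⟨⟨le_refl _, ht₁⟩, h0⟩
  have hσ_le : σ ≤ t₁ := csSup_le hKne fun x hx => hx.1.2
  have hσ0 : (0:ℝ) ≤ σ := le_trans ht₀ hσ_ge
  have hcont : ContinuousAt L σ := (hL σ hσ0).continuousAt
  have hσK : σ ∈ closure K := csSup_mem_closure hKne hKbdd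
  have hLσ_le : L σ ≤ C := by
    have h1 : L σ ∈ closure (L '' K) :=
      hcont.continuousWithinAt.mem_closure_image hσK
    have h2 : closure (L '' K) ⊆ Set.Iic C := by
      rw [show Set.Iic C = closure (Set.Iic C) from (isClosed_Iic.closure_eq).symm]
      exact closure_mono (by rintro y ⟨x, hx, rfl⟩; exact hx.2)
    exact h2 h1
  have hσlt : σ < t₁ :=
    lt_of_le_of_ne hσ_le (fun h => absurd (h ▸ hLσ_le) (not_le.mpr hcon))
  have hgt : ∀ t ∈ Set.Ioc σ t₁, C < L t := by
    intro t ht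
    by_contra hle
    push_neg at hle
    have : t ≤ σ := le_csSup hKbdd ⟨⟨le_trans hσ_ge ht.1.le, ht.2⟩, hle⟩
    exact absurd this (not_le.mpr ht.1)
  have hLσ_ge : C ≤ L σ := by
    have hcl : σ ∈ closure (Set.Ioc σ t₁) := by
      rw [closure_Ioc hσlt.ne]
      exact ⟨le_refl _, hσlt.le⟩
    have h1 : L σ ∈ closure (L '' Set.Ioc σ t₁) :=
      hcont.continuousWithinAt.mem_closure_image hcl
    have h2 : closure (L '' Set.Ioc σ t₁) ⊆ Set.Ici C := by
      rw [show Set.Ici C = closure (Set.Ici C) from (isClosed_Ici.closure_eq).symm]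
      exact closure_mono (by rintro y ⟨x, hx, rfl⟩; exact (hgt x hx).le)
    exact h2 h1
  have hLσ : L σ = C := le_antisymm hLσ_le hLσ_ge
  have hderiv : L' σ < 0 := hC σ hσ_ge hLσ
  have hslope : Filter.Tendsto (slope L σ) (nhdsWithin σ {σ}ᶜ) (nhds (L' σ)) :=
    hasDerivAt_iff_tendsto_slope.mp (hL σ hσ0)
  have hev : ∀ᶠ t in nhdsWithin σ {σ}ᶜ, slope L σ t < 0 :=
    hslope.eventually (eventually_lt_nhds hderiv)  -- may need fixing
  have hev' : ∀ᶠ t in nhdsWithin σ (Set.Ioi σ), slope L σ t < 0 :=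
    hev.filter_mono (nhdsWithin_mono σ (fun x hx => ne_of_gt hx))
  have hmem : Set.Ioc σ t₁ ∈ nhdsWithin σ (Set.Ioi σ) :=
    Ioc_mem_nhdsGT_of_mem ⟨le_refl _, hσlt⟩
  have : ∀ᶠ t in nhdsWithin σ (Set.Ioi σ), False := by
    filter_upwards [hev', hmem, self_mem_nhdsWithin] with t h1 h2 h3
    have hts : σ < t := h3
    have h4 : (L t - L σ) / (t - σ) < 0 := by rwa [slope_def_field] at h1
    have : L t - L σ < 0 := by
      rcases div_neg_iff.mp h4 with ⟨_, hn⟩ | ⟨hn, _⟩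
      · linarith
      · exact hn
    have := hgt t h2
    rw [hLσ] at *
    linarith
  exact this.exists.elim fun _ h => h


set_option maxHeartbeats 1000000 in
/-- Decay. With `ϱ = c₁/(2√(c₂c₃)F) > 1` there is `tϱ > 0`
depending only on `ϱ` such that for every `α > 0`, any continuously
differentiable `L` with `L' + αc₁L ≤ c₂F² + c₃α²L²` on `[0,∞)` and
`L 0 ≤ √(c₂/c₃)(F/α)(2ϱ-1)` satisfies `L t ≤ √(c₂/c₃)(F/α)(1/(2ϱ-1))` for
every `t ≥ tϱ/(α√(c₂c₃)F)`. -/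
theorem stmt14 (c₁ c₂ c₃ F : ℝ) (hc₁ : 0 < c₁) (hc₂ : 0 < c₂) (hc₃ : 0 < c₃) (hF : 0 < F)
    (ϱ : ℝ) (hϱdef : ϱ = c₁ / (2 * Real.sqrt (c₂ * c₃) * F)) (hϱ : 1 < ϱ) :
    ∃ tϱ : ℝ, 0 < tϱ ∧
      ∀ α : ℝ, 0 < α →
        ∀ L L' : ℝ → ℝ,
          (∀ t ∈ Set.Ici (0 : ℝ), HasDerivAt L (L' t) t) →
          ContinuousOn L' (Set.Ici 0) →
          (∀ t ∈ Set.Ici (0 : ℝ),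
            L' t + α * c₁ * L t ≤ c₂ * F ^ 2 + c₃ * α ^ 2 * (L t) ^ 2) →
          L 0 ≤ Real.sqrt (c₂ / c₃) * (F / α) * (2 * ϱ - 1) →
          ∀ t : ℝ, tϱ / (α * Real.sqrt (c₂ * c₃) * F) ≤ t →
            L t ≤ Real.sqrt (c₂ / c₃) * (F / α) * (1 / (2 * ϱ - 1)) := by
  refine ⟨2 * ϱ * (2 * ϱ - 1), by nlinarith, ?_⟩
  intro α hα L L' hL hL'cont hineq hL0 t ht
  obtain ⟨s, hs_def⟩ : ∃ s, s = Real.sqrt (c₂ * c₃) := ⟨_, rfl⟩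
  obtain ⟨r, hr_def⟩ : ∃ r, r = Real.sqrt (c₂ / c₃) := ⟨_, rfl⟩
  rw [← hs_def] at ht
  rw [← hr_def] at hL0 ⊢
  have hs_pos : 0 < s := hs_def ▸ Real.sqrt_pos.mpr (by positivity)
  have hr_pos : 0 < r := hr_def ▸ Real.sqrt_pos.mpr (by positivity)
  have hsr : s = c₃ * r := by
    rw [hs_def, hr_def, show c₂ * c₃ = c₃ ^ 2 * (c₂ / c₃) by field_simp,
      Real.sqrt_mul (by positivity), Real.sqrt_sq hc₃.le]
  have hc₂r : c₂ = c₃ * r ^ 2 := by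
    have hr_sq : r ^ 2 = c₂ / c₃ := hr_def ▸ Real.sq_sqrt (by positivity)
    rw [hr_sq]; field_simp
  have hc₁s : c₁ = 2 * s * F * ϱ := by
    rw [hϱdef, hs_def]; field_simp
  obtain ⟨u, hu_def⟩ : ∃ u : ℝ, u = 2 * ϱ - 1 := ⟨_, rfl⟩
  have hu : 1 < u := by rw [hu_def]; linarith
  have hu0 : 0 < u := by linarith
  obtain ⟨M, hM_def⟩ : ∃ M : ℝ, M = r * F / α / u := ⟨_, rfl⟩
  obtain ⟨B, hB_def⟩ : ∃ B : ℝ, B = r * F / α * u := ⟨_, rfl⟩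
  obtain ⟨δ, hδ_def⟩ : ∃ δ : ℝ, δ = c₂ * F ^ 2 * (u - 1) / u ^ 2 := ⟨_, rfl⟩
  have hδ_pos : 0 < δ := by
    rw [hδ_def]
    exact div_pos (mul_pos (mul_pos hc₂ (pow_pos hF 2)) (by linarith)) (by positivity)
  have hk_pos : 0 < r * F / α := by positivity
  have hM_pos : 0 < M := by rw [hM_def]; positivity
  have hMB : M ≤ B := by
    rw [hM_def, hB_def, div_le_iff₀ hu0]
    nlinarith [mul_le_mul_of_nonneg_left (show (1:ℝ) ≤ u * u by nlinarith) hk_pos.le]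
  -- the key quadratic estimate
  have hune : (2 * ϱ - 1) ≠ 0 := ne_of_gt (by linarith)
  have hquad : ∀ x, M ≤ x → x ≤ B → c₂ * F ^ 2 + c₃ * α ^ 2 * x ^ 2 - α * c₁ * x ≤ -δ := by
    intro x hxM hxB
    have key : c₂ * F ^ 2 + c₃ * α ^ 2 * x ^ 2 - α * c₁ * x + δ
        = c₃ * α ^ 2 * (x - M) * (x + M - 2 * ϱ * r * F / α) := by
      rw [hδ_def, hM_def, hc₁s, hsr, hc₂r, hu_def]
      field_simp [hα.ne', hune]
      ring
    have h1 : 0 ≤ c₃ * α ^ 2 * (x - M) := by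
      have : 0 ≤ x - M := by linarith
      positivity
    have h2 : x + M - 2 * ϱ * r * F / α ≤ 0 := by
      have hM_le : M ≤ r * F / α := by
        rw [hM_def]; exact div_le_self hk_pos.le hu.le
      have h2ϱ : 2 * ϱ * r * F / α = r * F / α * u + r * F / α := by
        rw [hu_def]; ring
      rw [hB_def] at hxB
      linarith
    linarith [mul_nonpos_of_nonneg_of_nonpos h1 h2, key]
  -- Step 1: L stays below B
  have hstepB : ∀ τ, (0:ℝ) ≤ τ → L τ ≤ B := by
    apply barrier_aux L L' B 0 le_rfl hL
    · intro τ hτ hLτ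
      have h := hineq τ hτ
      rw [hLτ] at h
      have := hquad B hMB le_rfl
      linarith
    · rw [hB_def]
      calc L 0 ≤ r * (F / α) * (2 * ϱ - 1) := hL0
        _ = r * F / α * u := by rw [hu_def]; ring
  -- threshold time
  obtain ⟨T, hT_def⟩ : ∃ T : ℝ, T = 2 * ϱ * (2 * ϱ - 1) / (α * s * F) := ⟨_, rfl⟩
  have hT_pos : 0 < T := by
    rw [hT_def]
    exact div_pos (by nlinarith) (by positivity)
  have hδT : δ * T = B - M := by
    rw [hδ_def, hT_def, hB_def, hM_def, hsr, hc₂r, hu_def]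
    field_simp [hα.ne', hune, hF.ne', hc₃.ne', hr_pos.ne']
    ring
  -- Step 2: L drops below M by time T
  have hstepM : ∃ t₂, 0 ≤ t₂ ∧ t₂ ≤ T ∧ L t₂ ≤ M := by
    by_contra hcon
    push_neg at hcon
    have hpos : ∀ τ ∈ Set.Icc (0:ℝ) T, M < L τ := by
      intro τ hτ
      by_contra hle
      push_neg at hle
      exact absurd hle (not_le.mpr (hcon τ hτ.1 hτ.2))
    have hanti : AntitoneOn (fun τ => L τ + δ * τ) (Set.Icc 0 T) := by
      apply antitoneOn_of_deriv_nonpos (convex_Icc 0 T)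
      · intro τ hτ
        exact (((hL τ hτ.1).add ((hasDerivAt_id τ).const_mul δ)).continuousAt).continuousWithinAt
      · intro τ hτ
        rw [interior_Icc] at hτ
        exact (((hL τ hτ.1.le).add
          ((hasDerivAt_id τ).const_mul δ)).differentiableAt).differentiableWithinAt
      · intro τ hτ
        rw [interior_Icc] at hτ
        have hd : HasDerivAt (fun τ => L τ + δ * τ) (L' τ + δ * 1) τ :=
          (hL τ hτ.1.le).add ((hasDerivAt_id τ).const_mul δ)
        rw [hd.deriv]
        have h1 := hineq τ hτ.1.le
        have h2 := hquad (L τ) (hpos τ ⟨hτ.1.le, hτ.2.le⟩).le (hstepB τ hτ.1.le)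
        linarith
    have hTT : L T + δ * T ≤ L 0 + δ * 0 := by
      simpa using hanti (Set.left_mem_Icc.mpr hT_pos.le) (Set.right_mem_Icc.mpr hT_pos.le)
        hT_pos.le
    have hLB : L 0 ≤ B := hstepB 0 le_rfl
    have : L T ≤ M := by linarith [hδT]
    exact absurd this (not_le.mpr (hpos T ⟨hT_pos.le, le_rfl⟩))
  -- Step 3: once below M, stays below M
  obtain ⟨t₂, ht₂0, ht₂T, ht₂M⟩ := hstepM
  have hfinal : ∀ τ, t₂ ≤ τ → L τ ≤ M :=
    barrier_aux L L' M t₂ ht₂0 hL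
      (fun τ hτ hLτ => by
        have h := hineq τ (le_trans ht₂0 hτ)
        rw [hLτ] at h
        have := hquad M le_rfl hMB
        linarith)
      ht₂M
  have htT : T ≤ t := by rw [hT_def]; exact ht
  calc L t ≤ M := hfinal t (le_trans ht₂T htT)
    _ = r * (F / α) * (1 / (2 * ϱ - 1)) := by
      rw [hM_def, hu_def]; field_simp
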